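/- Let r(z₁,z₂,z₃) = Re(z₁) + |z₂|²·Re(z₂² − z₃³) + |z₃|²·Re(z₃²) − Re(z₂²·conj(z₃)) on ℂ³. Then for the holomorphic curve γ(t) = (0, t³, t²), the composition r∘γ is identically zero; i.e., the image of γ lies in the hypersurface {r = 0}. -/

import Mathlib

open Complex

/-- The defining function r(z₁,z₂,z₃) = Re z₁ + |z₂|²Re(z₂²-z₃³) + |z₃|²Re(z₃²) - Re(z₂² z̄₃). -/
noncomputable def rDef (z₁ z₂ z₃ : ℂ) : ℝ :=
  z₁.re + ‖z₂‖ ^ 2 * (z₂ ^ 2 - z₃ ^ 3).re + ‖z₃‖ ^ 2 * (z₃ ^ 2).re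
    - (z₂ ^ 2 * (starRingEnd ℂ) z₃).re

/-- The curve γ(t) = (0, t³, t²) lies in the hypersurface {r = 0}. -/
theorem stmt0 : ∀ t : ℂ, rDef 0 (t ^ 3) (t ^ 2) = 0 := by
  intro t
  have h : ∀ z w : ℂ, ‖z‖ ^ 2 * w.re = (z * (starRingEnd ℂ) z * w).re := by
    intro z w
    rw [Complex.mul_conj]
    simp [Complex.normSq_eq_norm_sq, ← Complex.ofReal_pow]
  unfold rDef
  rw [h, h]
  have h1 : (t ^ 3) ^ 2 - (t ^ 2) ^ 3 = 0 := by ring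
  have h2 : t ^ 2 * (starRingEnd ℂ) (t ^ 2) * (t ^ 2) ^ 2
      = (t ^ 3) ^ 2 * (starRingEnd ℂ) (t ^ 2) := by ring
  rw [h1, h2]
  simp
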